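/- Let $S_n$ be a binomial random variable with parameters $n$ and $p \in [0,1]$. For all real $c$ with $1 < c < 2$ and all $d > 0$, the probability that $S_n/n \geq cp + d/n$ is at most $e^{(1-c)d}$. -/

import Mathlib

open Real Finset

lemma exp_le_quad {t : ℝ} (h0 : 0 ≤ t) (h1 : t ≤ 1) : Real.exp t ≤ 1 + t + t ^ 2 := by
  have hbd := Real.exp_bound (x := t) (by rw [abs_of_nonneg h0]; exact h1) (n := 2) (by norm_num)
  have h2 : ∑ m ∈ Finset.range 2, t ^ m / (m.factorial : ℝ) = 1 + t := by
    simp [Finset.sum_range_succ]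
  rw [h2, abs_of_nonneg h0] at hbd
  norm_num [Nat.factorial] at hbd
  have := abs_le.mp hbd
  nlinarith [this.2, sq_nonneg t]

lemma chernoff_real (n : ℕ) (hn : 0 < n) (p : ℝ) (hp0 : 0 ≤ p) (hp1 : p ≤ 1)
    (c d : ℝ) (hc1 : 1 < c) (hc2 : c < 2) (hd : 0 < d) :
    ∑ k : Fin (n + 1), Set.indicator {k : Fin (n + 1) | c * p + d / n ≤ ((k : ℕ) : ℝ) / n}
      (fun k => p ^ (k : ℕ) * (1 - p) ^ (n - (k : ℕ)) * (n.choose (k : ℕ) : ℝ)) k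
      ≤ Real.exp ((1 - c) * d) := by
  set t := c - 1 with ht
  have ht0 : 0 < t := by simp [ht]; linarith
  have ht1 : t ≤ 1 := by simp [ht]; linarith
  have hq : (0:ℝ) ≤ 1 - p := by linarith
  have hnpos : (0:ℝ) < n := by exact_mod_cast hn
  set M : ℝ := n * (c * p) + d with hM
  have step1 : ∑ k : Fin (n + 1), Set.indicator {k : Fin (n + 1) | c * p + d / n ≤ ((k : ℕ) : ℝ) / n}
      (fun k => p ^ (k : ℕ) * (1 - p) ^ (n - (k : ℕ)) * (n.choose (k : ℕ) : ℝ)) k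
      ≤ ∑ k : Fin (n + 1),
        (p * Real.exp t) ^ (k : ℕ) * (1 - p) ^ (n - (k : ℕ)) * (n.choose (k : ℕ) : ℝ)
          * Real.exp (-(t * M)) := by
    apply Finset.sum_le_sum
    intro k _
    have hrw : (p * Real.exp t) ^ (k : ℕ) * (1 - p) ^ (n - (k : ℕ)) * (n.choose (k : ℕ) : ℝ)
        * Real.exp (-(t * M))
        = (p ^ (k : ℕ) * (1 - p) ^ (n - (k : ℕ)) * (n.choose (k : ℕ) : ℝ))
          * (Real.exp (((k : ℕ) : ℝ) * t) * Real.exp (-(t * M))) := by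
      rw [mul_pow, ← Real.exp_nat_mul]
      ring_nf
    by_cases hk : k ∈ {k : Fin (n + 1) | c * p + d / n ≤ ((k : ℕ) : ℝ) / n}
    · rw [Set.indicator_of_mem hk, hrw]
      have hkM : M ≤ ((k : ℕ) : ℝ) := by
        have := hk
        simp only [Set.mem_setOf_eq] at this
        have h3 := mul_le_mul_of_nonneg_right this hnpos.le
        rw [add_mul, div_mul_cancel₀ _ hnpos.ne', div_mul_cancel₀ _ hnpos.ne'] at h3
        simp only [hM]
        nlinarith [h3]
      have h1 : 1 ≤ Real.exp (((k : ℕ) : ℝ) * t) * Real.exp (-(t * M)) := by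
        rw [← Real.exp_add]
        apply Real.one_le_exp
        nlinarith
      have hf : 0 ≤ p ^ (k : ℕ) * (1 - p) ^ (n - (k : ℕ)) * (n.choose (k : ℕ) : ℝ) := by positivity
      nlinarith
    · rw [Set.indicator_of_notMem hk]
      have : 0 ≤ p * Real.exp t := by positivity
      positivity
  have step2 : ∑ k : Fin (n + 1),
        (p * Real.exp t) ^ (k : ℕ) * (1 - p) ^ (n - (k : ℕ)) * (n.choose (k : ℕ) : ℝ)
          * Real.exp (-(t * M))
      = (p * Real.exp t + (1 - p)) ^ n * Real.exp (-(t * M)) := by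
    rw [← Finset.sum_mul, Fin.sum_univ_eq_sum_range
      (fun k => (p * Real.exp t) ^ k * (1 - p) ^ (n - k) * (n.choose k : ℝ)), ← add_pow]
  rw [step2] at step1
  refine step1.trans ?_
  have hbase : 0 ≤ p * Real.exp t + (1 - p) := by positivity
  have hb : p * Real.exp t + (1 - p) ≤ Real.exp (p * (Real.exp t - 1)) := by
    have := Real.add_one_le_exp (p * (Real.exp t - 1))
    linarith
  have hpow : (p * Real.exp t + (1 - p)) ^ n ≤ Real.exp ((n : ℝ) * (p * (Real.exp t - 1))) := by
    rw [Real.exp_nat_mul]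
    exact pow_le_pow_left₀ hbase hb n
  have hexp : Real.exp ((n : ℝ) * (p * (Real.exp t - 1))) * Real.exp (-(t * M))
      ≤ Real.exp ((1 - c) * d) := by
    rw [← Real.exp_add]
    apply Real.exp_le_exp.mpr
    have hq2 := exp_le_quad ht0.le ht1
    have hcore : Real.exp t - 1 - t * c ≤ 0 := by nlinarith
    have : (n : ℝ) * (p * (Real.exp t - 1 - t * c)) ≤ 0 := by
      apply mul_nonpos_of_nonneg_of_nonpos (le_of_lt hnpos)
      exact mul_nonpos_of_nonneg_of_nonpos hp0 hcore
    simp only [hM, ht] at this ⊢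
    nlinarith [this]
  calc (p * Real.exp t + (1 - p)) ^ n * Real.exp (-(t * M))
      ≤ Real.exp ((n : ℝ) * (p * (Real.exp t - 1))) * Real.exp (-(t * M)) := by
        apply mul_le_mul_of_nonneg_right hpow (Real.exp_pos _).le
    _ ≤ Real.exp ((1 - c) * d) := hexp

open MeasureTheory

/-- Chernoff-type upper tail bound for a binomial random variable `S_n` with
parameters `n ≥ 1` and `p ∈ [0,1]`: for `1 < c < 2` and `d > 0`,
`P(S_n / n ≥ c p + d / n) ≤ exp ((1 - c) d)`. -/
theorem binomial_upper_tail_chernoff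
    (n : ℕ) (hn : 0 < n) (p : ℝ) (hp0 : 0 ≤ p) (hp1 : p ≤ 1)
    (c d : ℝ) (hc1 : 1 < c) (hc2 : c < 2) (hd : 0 < d) :
    (PMF.binomial (Real.toNNReal p) (Real.toNNReal_le_one.mpr hp1) n).toMeasure
      {k : Fin (n + 1) | c * p + d / n ≤ ((k : ℕ) : ℝ) / n}
      ≤ ENNReal.ofReal (Real.exp ((1 - c) * d)) := by
  rw [PMF.toMeasure_apply_fintype]
  have hq : (0:ℝ) ≤ 1 - p := by linarith
  have key : ∀ k : Fin (n + 1),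
      Set.indicator {k : Fin (n + 1) | c * p + d / n ≤ ((k : ℕ) : ℝ) / n}
        (⇑(PMF.binomial (Real.toNNReal p) (Real.toNNReal_le_one.mpr hp1) n)) k
      = ENNReal.ofReal (Set.indicator {k : Fin (n + 1) | c * p + d / n ≤ ((k : ℕ) : ℝ) / n}
        (fun k => p ^ (k : ℕ) * (1 - p) ^ (n - (k : ℕ)) * (n.choose (k : ℕ) : ℝ)) k) := by
    intro k
    by_cases hk : k ∈ {k : Fin (n + 1) | c * p + d / n ≤ ((k : ℕ) : ℝ) / n}
    · rw [Set.indicator_of_mem hk, Set.indicator_of_mem hk, PMF.binomial_apply]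
      change ENNReal.ofReal p ^ _ * (1 - ENNReal.ofReal p) ^ _ * _ = _
      have h1 : (1 : ENNReal) - ENNReal.ofReal p = ENNReal.ofReal (1 - p) := by
        rw [ENNReal.ofReal_sub 1 hp0, ENNReal.ofReal_one]
      rw [h1, Fin.val_last, ← ENNReal.ofReal_pow hp0, ← ENNReal.ofReal_pow hq,
        ← ENNReal.ofReal_natCast (n.choose (k : ℕ)), ← ENNReal.ofReal_mul (by positivity),
        ← ENNReal.ofReal_mul (by positivity)]
    · rw [Set.indicator_of_notMem hk, Set.indicator_of_notMem hk, ENNReal.ofReal_zero]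
  simp only [key]
  rw [← ENNReal.ofReal_sum_of_nonneg (fun i _ => Set.indicator_nonneg (fun a _ => by positivity) i)]
  exact ENNReal.ofReal_le_ofReal (chernoff_real n hn p hp0 hp1 c d hc1 hc2 hd)
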